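/- (Conjecture II for four points, conditional form) Let m4 = d4 − (64p4 + 4z4 + v4²). If u = (a,b,c,x,y,z) ∈ ℝ⁶ is a vector of pairwise distances of four points in ℝ³, and p4(u)·m4(u) ≥ 0 holds whenever u is geometric with p4(u) > 0 (and m4 is continuous), then m4(u) ≥ 0 for all geometric u; consequently d4(u) ≥ 64 p4(u) + 4 z4(u) + v4(u)² ≥ 64 p4(u). -/

import Mathlib

noncomputable section

open Real

def d3 (x y z : ℝ) : ℝ := (-x + y + z) * (x - y + z) * (x + y - z)

def p4 (a b c x y z : ℝ) : ℝ := a * b * c * x * y * z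

def n4 (a b c x y z : ℝ) : ℝ := p4 a b c x y z - d3 (x*c) (a*y) (b*z)

def z4 (a b c x y z : ℝ) : ℝ :=
  a^2*y^2*(b^2 + c^2 + x^2 + z^2) + b^2*z^2*(a^2 + c^2 + x^2 + y^2)
  + c^2*x^2*(a^2 + b^2 + y^2 + z^2)
  - (a^4*y^2 + a^2*y^4 + b^4*z^2 + b^2*z^4 + c^4*x^2 + c^2*x^4)
  - (a^2*b^2*x^2 + a^2*c^2*z^2 + b^2*c^2*y^2 + x^2*y^2*z^2)

def v4 (a b c x y z : ℝ) : ℝ := (b + z - c - x) * (c + x - a - y) * (a + y - b - z)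

def w4 (a b c x y z : ℝ) : ℝ :=
  (a^2 + y^2)*(b - c - x + z) + (b^2 + z^2)*(-a + c + x - y) + (c^2 + x^2)*(a - b + y - z)
  + 2*(c*x + y*z)*(-a + b) + 2*(a*y + x*z)*(-b + c) + 2*(b*z + x*y)*(a - c)

/-- Symmetric average over the 24 permutations of the distance vector induced by
permuting the four underlying points. -/
def av (f : ℝ → ℝ → ℝ → ℝ → ℝ → ℝ → ℝ) (a b c x y z : ℝ) : ℝ :=
  (1/24) * (f a b c x y z + f a x z b y c + f b c a y z x + f x b y a c z
  + f c a b z x y + f z y c x b a + f y z c x a b + f c b a y x z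
  + f x y b z c a + f a c b z y x + f z x a y b c + f b a c x z y
  + f z c y a b x + f x z a y c b + f x a z b c y + f y x b z a c
  + f y b x c a z + f y c z b a x + f c y z b x a + f z a x c b y
  + f b x y a z c + f c z y a x b + f a z x c y b + f b y x c z a)

def enTerm (a b c x y z : ℝ) : ℝ := a * ((b + c)^2 - y^2) * d3 x y z

def d4 (a b c x y z : ℝ) : ℝ :=
  60 * p4 a b c x y z + 4 * n4 a b c x y z + 2 * z4 a b c x y z
    + 12 * av enTerm a b c x y z

def m4 (a b c x y z : ℝ) : ℝ :=
  d4 a b c x y z - (64 * p4 a b c x y z + 4 * z4 a b c x y z + (v4 a b c x y z)^2)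

def P4 (a b c x y z : ℝ) : ℝ :=
  (8*x*y*z + d3 x y z) * (8*a*b*x + d3 a b x) * (8*a*c*z + d3 a c z) * (8*b*c*y + d3 b c y)

def M4 (a b c x y z : ℝ) : ℝ :=
  (64 * p4 a b c x y z + m4 a b c x y z)^2
  + 32 * p4 a b c x y z * (4 * z4 a b c x y z + (v4 a b c x y z)^2)
  - P4 a b c x y z

/-- The twelve triangular variables. -/
def tv : Fin 12 → ℝ → ℝ → ℝ → ℝ → ℝ → ℝ → ℝ
  | 0 => fun a b _ x _ _ => -a + b + x
  | 1 => fun a b _ x _ _ => a - b + x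
  | 2 => fun a b _ x _ _ => a + b - x
  | 3 => fun _ b c _ y _ => -b + c + y
  | 4 => fun _ b c _ y _ => b - c + y
  | 5 => fun _ b c _ y _ => b + c - y
  | 6 => fun a _ c _ _ z => -a + c + z
  | 7 => fun a _ c _ _ z => a - c + z
  | 8 => fun a _ c _ _ z => a + c - z
  | 9 => fun _ _ _ x y z => -x + y + z
  | 10 => fun _ _ _ x y z => x - y + z
  | 11 => fun _ _ _ x y z => x + y - z

def tmon (α : Fin 12 → ℕ) (a b c x y z : ℝ) : ℝ :=
  ∏ i : Fin 12, (tv i a b c x y z) ^ (α i)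

abbrev E3 := EuclideanSpace ℝ (Fin 3)

open Filter Topology in
lemma ev_ne (w v : E3) (hw : w ≠ 0) : ∀ᶠ t in 𝓝[≠] (0:ℝ), t • w ≠ v := by
  rcases eq_or_ne v 0 with rfl | hv
  · filter_upwards [self_mem_nhdsWithin] with t ht
    exact smul_ne_zero ht hw
  · apply eventually_nhdsWithin_of_eventually_nhds
    have hc : Continuous fun t : ℝ => t • w := continuous_id.smul continuous_const
    have h0 : (fun t : ℝ => t • w) 0 ≠ v := by simpa using hv.symm
    exact hc.continuousAt.eventually_ne h0

lemma cont_m4 {f1 f2 f3 f4 f5 f6 : ℝ → ℝ} (h1 : Continuous f1) (h2 : Continuous f2)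
    (h3 : Continuous f3) (h4 : Continuous f4) (h5 : Continuous f5) (h6 : Continuous f6) :
    Continuous fun t => m4 (f1 t) (f2 t) (f3 t) (f4 t) (f5 t) (f6 t) := by
  unfold m4 d4 n4 p4 z4 v4 av enTerm d3
  fun_prop

open Filter Topology in
theorem stmt16
    (H : ∀ A B C D : E3, A ≠ B → A ≠ C → A ≠ D → B ≠ C → B ≠ D → C ≠ D →
      0 ≤ p4 (dist A D) (dist B D) (dist C D) (dist A B) (dist B C) (dist A C)
        * m4 (dist A D) (dist B D) (dist C D) (dist A B) (dist B C) (dist A C))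
    (Hz : ∀ A B C D : E3,
      0 ≤ z4 (dist A D) (dist B D) (dist C D) (dist A B) (dist B C) (dist A C)) :
    ∀ A B C D : E3,
      0 ≤ m4 (dist A D) (dist B D) (dist C D) (dist A B) (dist B C) (dist A C)
      ∧ 64 * p4 (dist A D) (dist B D) (dist C D) (dist A B) (dist B C) (dist A C)
          ≤ d4 (dist A D) (dist B D) (dist C D) (dist A B) (dist B C) (dist A C) := by
  intro A B C D
  set u0 : E3 := EuclideanSpace.single 0 1 with hu0def
  set u1 : E3 := EuclideanSpace.single 1 1 with hu1def
  set u2 : E3 := EuclideanSpace.single 2 1 with hu2def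
  have hne : ∀ i j : Fin 3, i ≠ j →
      (EuclideanSpace.single i (1:ℝ) : E3) - EuclideanSpace.single j 1 ≠ 0 := by
    intro i j h hh
    have := congrArg (fun v : E3 => v i) hh
    simp [EuclideanSpace.single_apply, h, h.symm] at this
  have hsingle : ∀ i : Fin 3, (EuclideanSpace.single i (1:ℝ) : E3) ≠ 0 := by
    intro i h
    have := congrArg (fun v : E3 => v i) h
    simp [EuclideanSpace.single_apply] at this
  -- the perturbed points
  set Pb : ℝ → E3 := fun t => B + t • u0 with hPb
  set Pc : ℝ → E3 := fun t => C + t • u1 with hPc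
  set Pd : ℝ → E3 := fun t => D + t • u2 with hPd
  set g : ℝ → ℝ := fun t =>
    m4 (dist A (Pd t)) (dist (Pb t) (Pd t)) (dist (Pc t) (Pd t))
      (dist A (Pb t)) (dist (Pb t) (Pc t)) (dist A (Pc t)) with hg
  have hcont : Continuous g := by
    apply cont_m4 <;> fun_prop
  have hg0 : g 0 = m4 (dist A D) (dist B D) (dist C D) (dist A B) (dist B C) (dist A C) := by
    simp [hg, hPb, hPc, hPd]
  have hkey : 0 ≤ m4 (dist A D) (dist B D) (dist C D) (dist A B) (dist B C) (dist A C) := by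
    rw [← hg0]
    have htend : Tendsto g (𝓝[≠] (0:ℝ)) (𝓝 (g 0)) :=
      (hcont.tendsto 0).mono_left nhdsWithin_le_nhds
    refine ge_of_tendsto htend ?_
    filter_upwards [ev_ne u0 (A - B) (hsingle 0), ev_ne u1 (A - C) (hsingle 1),
      ev_ne u2 (A - D) (hsingle 2), ev_ne (u1 - u0) (B - C) (hne 1 0 (by decide)),
      ev_ne (u2 - u0) (B - D) (hne 2 0 (by decide)), ev_ne (u2 - u1) (C - D) (hne 2 1 (by decide))]
      with t e1 e2 e3 e4 e5 e6
    have d1 : A ≠ Pb t := fun h => e1 (by rw [h]; simp [hPb])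
    have d2 : A ≠ Pc t := fun h => e2 (by rw [h]; simp [hPc])
    have d3' : A ≠ Pd t := fun h => e3 (by rw [h]; simp [hPd])
    have d4' : Pb t ≠ Pc t := fun h => e4 (by
      have : B + t • u0 = C + t • u1 := h
      rw [smul_sub, sub_eq_sub_iff_add_eq_add, this]
      abel)
    have d5 : Pb t ≠ Pd t := fun h => e5 (by
      have : B + t • u0 = D + t • u2 := h
      rw [smul_sub, sub_eq_sub_iff_add_eq_add, this]
      abel)
    have d6 : Pc t ≠ Pd t := fun h => e6 (by
      have : C + t • u1 = D + t • u2 := h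
      rw [smul_sub, sub_eq_sub_iff_add_eq_add, this]
      abel)
    have hH := H A (Pb t) (Pc t) (Pd t) d1 d2 d3' d4' d5 d6
    have hp : 0 < p4 (dist A (Pd t)) (dist (Pb t) (Pd t)) (dist (Pc t) (Pd t))
        (dist A (Pb t)) (dist (Pb t) (Pc t)) (dist A (Pc t)) := by
      have h1 := dist_pos.mpr d3'
      have h2 := dist_pos.mpr d5
      have h3 := dist_pos.mpr d6
      have h4 := dist_pos.mpr d1
      have h5 := dist_pos.mpr d4'
      have h6 := dist_pos.mpr d2
      unfold p4
      positivity
    nlinarith [hH, hp]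
  refine ⟨hkey, ?_⟩
  have hz := Hz A B C D
  have hv := sq_nonneg (v4 (dist A D) (dist B D) (dist C D) (dist A B) (dist B C) (dist A C))
  have : m4 (dist A D) (dist B D) (dist C D) (dist A B) (dist B C) (dist A C)
      = d4 (dist A D) (dist B D) (dist C D) (dist A B) (dist B C) (dist A C)
        - (64 * p4 (dist A D) (dist B D) (dist C D) (dist A B) (dist B C) (dist A C)
          + 4 * z4 (dist A D) (dist B D) (dist C D) (dist A B) (dist B C) (dist A C)
          + (v4 (dist A D) (dist B D) (dist C D) (dist A B) (dist B C) (dist A C))^2) := rfl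
  linarith [hkey, hz, hv, this.symm.le, this.le]
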